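/- Let (X,T) be a minimal Cantor system with a nested sequence of clopen Kakutani–Rohlin partitions satisfying (KR1)–(KR6). Let α ∈ ℝ, let m > 1 be an integer, and let v_m ∈ ℝ^{C_m} and w_m ∈ ℤ^{C_m} satisfy α·P_m H_1 = v_m + w_m and Σ_{n > m} ‖P_{n,m} v_m‖_∞ < ∞. Then for every μ ∈ M(X,T) and every integer n ≥ m: α = ⟨μ_m, w_m⟩ and ⟨μ_n, P_{n,m} v_m⟩ = 0, where μ_n = (μ(B_n(k)))_{k=1}^{C_n} is the measure vector. -/

import Mathlib

open MeasureTheory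

/-- A nested sequence of clopen Kakutani–Rohlin partitions of a Cantor system `(X,T)`
satisfying (KR1)–(KR6), with the conventions `C 0 = 1`, `h 0 = 1`, `B 0 = X` and
`h 1 (k) = 1`.  The atoms of the `n`-th partition are the sets `T^j (B n k)` for
`0 ≤ j < h n k`. -/
structure KRSystem (X : Type*) [TopologicalSpace X] (T : X ≃ₜ X) where
  /-- number of towers at level `n` -/
  C : ℕ → ℕ
  C_pos : ∀ n, 0 < C n
  /-- bases of the towers -/
  B : (n : ℕ) → Fin (C n) → Set X
  /-- heights of the towers -/
  h : (n : ℕ) → Fin (C n) → ℕ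
  h_pos : ∀ n k, 0 < h n k
  clopen : ∀ n k, IsClopen (B n k)
  C_zero : C 0 = 1
  h_zero : ∀ k, h 0 k = 1
  B_zero : ∀ k, B 0 k = Set.univ
  h_one : ∀ k, h 1 k = 1
  /-- the atoms `T^j (B n k)`, `0 ≤ j < h n k`, are pairwise disjoint -/
  disj : ∀ n, ∀ k k' : Fin (C n), ∀ j j' : ℕ, j < h n k → j' < h n k' →
    (k ≠ k' ∨ j ≠ j') → Disjoint ((⇑T)^[j] '' B n k) ((⇑T)^[j'] '' B n k')
  /-- the atoms cover `X` -/
  cover : ∀ n, (⋃ (k : Fin (C n)) (j : ℕ) (_ : j < h n k), (⇑T)^[j] '' B n k) = Set.univ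
  /-- `⋃ k, T^{h n k} (B n k) = ⋃ k, B n k` -/
  ret : ∀ n, (⋃ k : Fin (C n), (⇑T)^[h n k] '' B n k) = ⋃ k : Fin (C n), B n k
  /-- (KR1) -/
  kr1 : ∀ n, (⋃ k : Fin (C (n + 1)), B (n + 1) k) ⊆ ⋃ k : Fin (C n), B n k
  /-- (KR2) the `(n+1)`-st partition refines the `n`-th one -/
  kr2 : ∀ n, ∀ l : Fin (C (n + 1)), ∀ j : ℕ, j < h (n + 1) l →
    ∃ k : Fin (C n), ∃ i : ℕ, i < h n k ∧ (⇑T)^[j] '' B (n + 1) l ⊆ (⇑T)^[i] '' B n k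
  /-- (KR3) the intersection of the bases is a single point -/
  kr3 : ∃ x : X, (⋂ n, ⋃ k : Fin (C n), B n k) = {x}
  /-- (KR4) the atoms span the topology of `X` -/
  kr4 : ∀ U : Set X, IsOpen U → ∀ x ∈ U, ∃ n, ∃ k : Fin (C n), ∃ j : ℕ,
    j < h n k ∧ x ∈ (⇑T)^[j] '' B n k ∧ (⇑T)^[j] '' B n k ⊆ U
  /-- (KR5) -/
  kr5 : ∀ n, ∀ k : Fin (C n), ∀ l : Fin (C (n + 1)), ∃ j : ℕ,
    j < h (n + 1) l ∧ (⇑T)^[j] '' B (n + 1) l ⊆ B n k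
  /-- (KR6) -/
  kr6 : ∀ n, (⋃ k : Fin (C (n + 1)), B (n + 1) k) ⊆ B n ⟨0, C_pos n⟩

variable {X : Type*} [TopologicalSpace X] {T : X ≃ₜ X}

/-- The incidence matrix between levels `n` and `n+1`; `KRM S n` corresponds to `M_{n+1}`
of the paper. -/
noncomputable def KRM (S : KRSystem X T) (n : ℕ) :
    Matrix (Fin (S.C (n + 1))) (Fin (S.C n)) ℤ := fun l k =>
  (Nat.card {j : ℕ // j < S.h (n + 1) l ∧ (⇑T)^[j] '' S.B (n + 1) l ⊆ S.B n k} : ℤ)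

/-- `KRP S m d` is the matrix `P_{m+d,m} = M_{m+d} ⋯ M_{m+1}` of the paper
(with `KRP S m 0 = 1`). -/
noncomputable def KRP (S : KRSystem X T) (m : ℕ) :
    (d : ℕ) → Matrix (Fin (S.C (m + d))) (Fin (S.C m)) ℤ
  | 0 => (1 : Matrix (Fin (S.C m)) (Fin (S.C m)) ℤ)
  | d + 1 => KRM S (m + d) * KRP S m d

/-- entrance time of `x` to the base of the `n`-th partition -/
noncomputable def KREntrance (S : KRSystem X T) (n : ℕ) (x : X) : ℕ :=
  sInf {j : ℕ | (⇑T)^[j] x ∈ ⋃ k : Fin (S.C n), S.B n k}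

/-- the suffix vector `s_n(x)` -/
noncomputable def KRSuffix (S : KRSystem X T) (n : ℕ) (x : X) (k : Fin (S.C n)) : ℕ :=
  Nat.card {j : ℕ // j < KREntrance S (n + 1) x ∧ (⇑T)^[j] x ∈ S.B n k}


section Aux

variable {X : Type*} [TopologicalSpace X] {T : X ≃ₜ X}

lemma KR.atom_clopen (S : KRSystem X T) (n : ℕ) (k : Fin (S.C n)) (j : ℕ) :
    IsClopen ((⇑T)^[j] '' S.B n k) := by
  have h1 : Function.LeftInverse ((⇑T.symm)^[j]) ((⇑T)^[j]) :=
    Function.LeftInverse.iterate (fun x => T.symm_apply_apply x) j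
  have h2 : Function.RightInverse ((⇑T.symm)^[j]) ((⇑T)^[j]) :=
    Function.LeftInverse.iterate (fun x => T.apply_symm_apply x) j
  rw [show (⇑T)^[j] '' S.B n k = ((⇑T.symm)^[j]) ⁻¹' S.B n k from
    congrFun (Set.image_eq_preimage_of_inverse h1 h2) _]
  exact (S.clopen n k).preimage (T.symm.continuous.iterate j)

variable [MeasurableSpace X] [BorelSpace X]

lemma KR.atom_measurable (S : KRSystem X T) (n : ℕ) (k : Fin (S.C n)) (j : ℕ) :
    MeasurableSet ((⇑T)^[j] '' S.B n k) :=
  (KR.atom_clopen S n k j).isOpen.measurableSet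

lemma KR.measure_image (μ : Measure X) (hinv : Measure.map T μ = μ)
    {A : Set X} (hTA : MeasurableSet (⇑T '' A)) : μ (⇑T '' A) = μ A := by
  have h1 : (Measure.map T μ) (⇑T '' A) = μ (⇑T '' A) := by rw [hinv]
  rw [Measure.map_apply T.continuous.measurable hTA,
    Set.preimage_image_eq _ T.injective] at h1
  exact h1.symm

lemma KR.measure_atom (S : KRSystem X T) (μ : Measure X) (hinv : Measure.map T μ = μ)
    (n : ℕ) (k : Fin (S.C n)) (j : ℕ) :
    μ ((⇑T)^[j] '' S.B n k) = μ (S.B n k) := by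
  induction j with
  | zero => simp
  | succ j ih =>
    have h1 : (⇑T)^[j + 1] '' S.B n k = ⇑T '' ((⇑T)^[j] '' S.B n k) := by
      rw [Function.iterate_succ', Set.image_comp]
    rw [h1, KR.measure_image μ hinv (by rw [← h1]; exact KR.atom_measurable S n k (j + 1)), ih]

/-- the sum over the towers of `h · μ(B)` equals `1` -/
lemma KR.sum_heights (S : KRSystem X T) (μ : Measure X) [IsProbabilityMeasure μ]
    (hinv : Measure.map T μ = μ) (n : ℕ) :
    ∑ k : Fin (S.C n), (S.h n k : ℝ) * (μ (S.B n k)).toReal = 1 := by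
  classical
  set A : ((k : Fin (S.C n)) × Fin (S.h n k)) → Set X :=
    fun i => (⇑T)^[(i.2 : ℕ)] '' S.B n i.1 with hAdef
  have hdisj : Pairwise (Function.onFun Disjoint A) := by
    rintro ⟨k, j⟩ ⟨k', j'⟩ hne
    refine S.disj n k k' j j' j.isLt j'.isLt ?_
    rcases eq_or_ne k k' with rfl | hk
    · right; intro hj; exact hne (congrArg (Sigma.mk k) (Fin.ext hj))
    · left; exact hk
  have hmeas : ∀ i, MeasurableSet (A i) := fun i => KR.atom_measurable S n i.1 i.2
  have hcov : ⋃ i, A i = Set.univ := by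
    rw [← S.cover n]
    ext x
    simp only [Set.mem_iUnion, Sigma.exists, hAdef]
    constructor
    · rintro ⟨k, j, hx⟩; exact ⟨k, j, j.isLt, hx⟩
    · rintro ⟨k, j, hj, hx⟩; exact ⟨k, ⟨j, hj⟩, hx⟩
  have h1 : (1 : ENNReal) = ∑ i, μ (A i) := by
    rw [← measure_univ (μ := μ), ← hcov, measure_iUnion hdisj hmeas, tsum_fintype]
  have h2 : ∑ i, μ (A i) = ∑ k : Fin (S.C n), (S.h n k : ENNReal) * μ (S.B n k) := by
    rw [← Finset.univ_sigma_univ, Finset.sum_sigma]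
    refine Finset.sum_congr rfl fun k _ => ?_
    have : ∀ j : Fin (S.h n k), μ (A ⟨k, j⟩) = μ (S.B n k) :=
      fun j => KR.measure_atom S μ hinv n k j
    rw [Finset.sum_congr rfl fun j _ => this j,
      Finset.sum_const, Finset.card_univ, Fintype.card_fin, nsmul_eq_mul]
  have h3 : ∑ k : Fin (S.C n), (S.h n k : ENNReal) * μ (S.B n k) = 1 := by
    rw [← h2, ← h1]
  have h4 := congrArg ENNReal.toReal h3
  rw [ENNReal.toReal_sum (fun k _ => by
    exact ENNReal.mul_ne_top (ENNReal.natCast_ne_top _) (measure_ne_top μ _))] at h4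
  simpa [ENNReal.toReal_mul] using h4

/-- sum of base measures is at most 1 -/
lemma KR.sum_bases_le (S : KRSystem X T) (μ : Measure X) [IsProbabilityMeasure μ] (n : ℕ) :
    ∑ k : Fin (S.C n), (μ (S.B n k)).toReal ≤ 1 := by
  have hdisj : Pairwise (Function.onFun Disjoint (fun k : Fin (S.C n) => S.B n k)) := by
    intro k k' hk
    have := S.disj n k k' 0 0 (S.h_pos n k) (S.h_pos n k') (Or.inl hk)
    simpa using this
  have h1 : ∑ k : Fin (S.C n), μ (S.B n k) ≤ 1 := by
    rw [← tsum_fintype (L := SummationFilter.unconditional _),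
      ← measure_iUnion hdisj (fun k => (S.clopen n k).isOpen.measurableSet)]
    exact prob_le_one
  calc ∑ k : Fin (S.C n), (μ (S.B n k)).toReal
      = (∑ k : Fin (S.C n), μ (S.B n k)).toReal :=
        (ENNReal.toReal_sum (fun k _ => measure_ne_top μ _)).symm
    _ ≤ (1 : ENNReal).toReal := ENNReal.toReal_mono ENNReal.one_ne_top h1
    _ = 1 := by simp

/-- matrix recursion for measure vectors -/
lemma KR.measure_rec (S : KRSystem X T) (μ : Measure X) [IsProbabilityMeasure μ]
    (hinv : Measure.map T μ = μ) (n : ℕ) (k : Fin (S.C n)) :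
    (μ (S.B n k)).toReal
      = ∑ l : Fin (S.C (n + 1)), (KRM S n l k : ℝ) * (μ (S.B (n + 1) l)).toReal := by
  classical
  set A : ((l : Fin (S.C (n + 1))) × Fin (S.h (n + 1) l)) → Set X :=
    fun i => (⇑T)^[(i.2 : ℕ)] '' S.B (n + 1) i.1 with hAdef
  have hdisjA : Pairwise (Function.onFun Disjoint A) := by
    rintro ⟨l, j⟩ ⟨l', j'⟩ hne
    refine S.disj (n + 1) l l' j j' j.isLt j'.isLt ?_
    rcases eq_or_ne l l' with rfl | hl
    · right; intro hj; exact hne (congrArg (Sigma.mk l) (Fin.ext hj))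
    · left; exact hl
  have hdisj : Pairwise (Function.onFun Disjoint (fun i => A i ∩ S.B n k)) := by
    intro i i' hne
    exact (hdisjA hne).mono Set.inter_subset_left Set.inter_subset_left
  have hmeas : ∀ i, MeasurableSet (A i ∩ S.B n k) := fun i =>
    (KR.atom_measurable S (n + 1) i.1 i.2).inter (S.clopen n k).isOpen.measurableSet
  have hcov : ⋃ i, A i = Set.univ := by
    rw [← S.cover (n + 1)]
    ext x
    simp only [Set.mem_iUnion, Sigma.exists, hAdef]
    constructor
    · rintro ⟨l, j, hx⟩; exact ⟨l, j, j.isLt, hx⟩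
    · rintro ⟨l, j, hj, hx⟩; exact ⟨l, ⟨j, hj⟩, hx⟩
  have h1 : μ (S.B n k) = ∑ i, μ (A i ∩ S.B n k) := by
    conv_lhs => rw [← Set.univ_inter (S.B n k), ← hcov, Set.iUnion_inter]
    rw [measure_iUnion hdisj hmeas, tsum_fintype]
  have hval : ∀ i, μ (A i ∩ S.B n k) =
      if (⇑T)^[(i.2 : ℕ)] '' S.B (n + 1) i.1 ⊆ S.B n k then μ (S.B (n + 1) i.1) else 0 := by
    rintro ⟨l, j⟩
    by_cases hsub : (⇑T)^[(j : ℕ)] '' S.B (n + 1) l ⊆ S.B n k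
    · rw [if_pos hsub]
      have : A ⟨l, j⟩ ∩ S.B n k = A ⟨l, j⟩ := Set.inter_eq_self_of_subset_left hsub
      rw [this]
      exact KR.measure_atom S μ hinv (n + 1) l j
    · rw [if_neg hsub]
      obtain ⟨k', i0, hi0, hsub'⟩ := S.kr2 n l j j.isLt
      have hdis : Disjoint ((⇑T)^[(j : ℕ)] '' S.B (n + 1) l) (S.B n k) := by
        by_cases hcase : k' = k ∧ i0 = 0
        · obtain ⟨rfl, rfl⟩ := hcase
          exact absurd (by simpa using hsub') hsub
        · have hne3 : k' ≠ k ∨ i0 ≠ 0 := by tauto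
          have hd := S.disj n k' k i0 0 hi0 (S.h_pos n k) hne3
          simp only [Function.iterate_zero, Set.image_id] at hd
          exact hd.mono_left hsub'
      have : A ⟨l, j⟩ ∩ S.B n k = ∅ := Set.disjoint_iff_inter_eq_empty.mp hdis
      rw [this, measure_empty]
  -- recast KRM as a filter cardinality
  have hcard : ∀ l : Fin (S.C (n + 1)),
      Nat.card {j : ℕ // j < S.h (n + 1) l ∧ (⇑T)^[j] '' S.B (n + 1) l ⊆ S.B n k}
        = (Finset.univ.filter
            (fun j : Fin (S.h (n + 1) l) => (⇑T)^[(j : ℕ)] '' S.B (n + 1) l ⊆ S.B n k)).card := by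
    intro l
    have e : {j : ℕ // j < S.h (n + 1) l ∧ (⇑T)^[j] '' S.B (n + 1) l ⊆ S.B n k}
        ≃ {j : Fin (S.h (n + 1) l) // (⇑T)^[(j : ℕ)] '' S.B (n + 1) l ⊆ S.B n k} :=
      { toFun := fun x => ⟨⟨x.1, x.2.1⟩, x.2.2⟩
        invFun := fun x => ⟨(x.1 : ℕ), x.1.isLt, x.2⟩
        left_inv := fun x => rfl
        right_inv := fun x => rfl }
    rw [Nat.card_congr e, Nat.card_eq_fintype_card, Fintype.card_subtype]
  have h2 : ∑ i, μ (A i ∩ S.B n k) = ∑ l : Fin (S.C (n + 1)),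
      (Nat.card {j : ℕ // j < S.h (n + 1) l ∧ (⇑T)^[j] '' S.B (n + 1) l ⊆ S.B n k} : ENNReal)
        * μ (S.B (n + 1) l) := by
    rw [← Finset.univ_sigma_univ, Finset.sum_sigma]
    refine Finset.sum_congr rfl fun l _ => ?_
    have : ∀ j : Fin (S.h (n + 1) l), μ (A ⟨l, j⟩ ∩ S.B n k) =
        if (⇑T)^[(j : ℕ)] '' S.B (n + 1) l ⊆ S.B n k then μ (S.B (n + 1) l) else 0 :=
      fun j => hval ⟨l, j⟩
    rw [Finset.sum_congr rfl fun j _ => this j, Finset.sum_ite, Finset.sum_const,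
      Finset.sum_const_zero, add_zero, hcard l, nsmul_eq_mul]
  have h3 := congrArg ENNReal.toReal (h1.trans h2)
  rw [ENNReal.toReal_sum (fun l _ => by
    exact ENNReal.mul_ne_top (ENNReal.natCast_ne_top _) (measure_ne_top μ _))] at h3
  rw [h3]
  refine Finset.sum_congr rfl fun l _ => ?_
  rw [ENNReal.toReal_mul]
  congr 1

end Aux

/-- Given a minimal Cantor system with a nested sequence of CKR partitions
satisfying (KR1)–(KR6), if `α · P_m H_1 = v_m + w_m` (recall `P_m H_1 = H_m`) with
`Σ_{n>m} ‖P_{n,m} v_m‖_∞ < ∞`, then for every invariant probability measure `μ` and every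
`n ≥ m` (written `n = m + d`): `α = ⟨μ_m, w_m⟩` and `⟨μ_n, P_{n,m} v_m⟩ = 0`. -/
theorem stmt7 {X : Type*} [TopologicalSpace X] [CompactSpace X]
    [TopologicalSpace.MetrizableSpace X] [TotallyDisconnectedSpace X] [Nonempty X]
    [MeasurableSpace X] [BorelSpace X]
    (hni : ∀ x : X, ¬IsOpen ({x} : Set X))
    (T : X ≃ₜ X)
    (hmin : ∀ x : X, Dense (Set.range fun n : ℤ => (T.toEquiv ^ n) x))
    (S : KRSystem X T)
    (α : ℝ) (m : ℕ) (hm : 1 < m)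
    (v : Fin (S.C m) → ℝ) (w : Fin (S.C m) → ℤ)
    (heq : ∀ l : Fin (S.C m), α * (S.h m l : ℝ) = v l + (w l : ℝ))
    (hsum : Summable fun d : ℕ =>
      ‖((KRP S m (d + 1)).map (Int.cast : ℤ → ℝ)).mulVec v‖)
    (μ : Measure X) (hμ : IsProbabilityMeasure μ) (hinv : Measure.map T μ = μ) :
    (∑ l : Fin (S.C m), (μ (S.B m l)).toReal * (w l : ℝ)) = α ∧
    ∀ d : ℕ, (∑ l : Fin (S.C (m + d)),
      (μ (S.B (m + d) l)).toReal *
        (((KRP S m d).map (Int.cast : ℤ → ℝ)).mulVec v) l) = 0 := by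
  classical
  haveI := hμ
  set r : (n : ℕ) → Fin (S.C n) → ℝ := fun n k => (μ (S.B n k)).toReal with hr
  set u : (d : ℕ) → Fin (S.C (m + d)) → ℝ :=
    fun d => ((KRP S m d).map (Int.cast : ℤ → ℝ)).mulVec v with hu
  set c : ℕ → ℝ := fun d => ∑ l : Fin (S.C (m + d)), r (m + d) l * u d l with hc
  have hmapmul : ∀ d : ℕ, (KRP S m (d + 1)).map (Int.cast : ℤ → ℝ)
      = (KRM S (m + d)).map (Int.cast : ℤ → ℝ) * (KRP S m d).map (Int.cast : ℤ → ℝ) := by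
    intro d
    show ((KRM S (m + d) * KRP S m d).map (Int.cast : ℤ → ℝ)) = _
    exact Matrix.map_mul (f := Int.castRingHom ℝ)
  have hstep : ∀ d, c (d + 1) = c d := by
    intro d
    have hmv : ∀ l, u (d + 1) l
        = ∑ k : Fin (S.C (m + d)), (KRM S (m + d) l k : ℝ) * u d k := by
      intro l
      show (((KRP S m (d + 1)).map (Int.cast : ℤ → ℝ)).mulVec v) l = _
      rw [hmapmul d, ← Matrix.mulVec_mulVec]
      simp [Matrix.mulVec, dotProduct, Matrix.map_apply, hu]
    calc c (d + 1) = ∑ l : Fin (S.C (m + (d + 1))), r (m + (d + 1)) l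
          * ∑ k : Fin (S.C (m + d)), (KRM S (m + d) l k : ℝ) * u d k := by
          refine Finset.sum_congr rfl fun l _ => ?_
          rw [hmv l]
      _ = ∑ k : Fin (S.C (m + d)),
            (∑ l : Fin (S.C (m + (d + 1))), (KRM S (m + d) l k : ℝ) * r (m + (d + 1)) l)
              * u d k := by
          simp_rw [Finset.mul_sum, Finset.sum_mul]
          rw [Finset.sum_comm]
          refine Finset.sum_congr rfl fun k _ => Finset.sum_congr rfl fun l _ => by ring
      _ = ∑ k : Fin (S.C (m + d)), r (m + d) k * u d k := by
          refine Finset.sum_congr rfl fun k _ => ?_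
          exact congrArg (fun t => t * u d k) (KR.measure_rec S μ hinv (m + d) k).symm
      _ = c d := rfl
  have hconst : ∀ d, c d = c 0 := by
    intro d
    induction d with
    | zero => rfl
    | succ d ih => rw [hstep d, ih]
  have hbound : ∀ d, |c d| ≤ ‖u d‖ := by
    intro d
    have h0 : ∀ l : Fin (S.C (m + d)), |u d l| ≤ ‖u d‖ := by
      intro l
      have := norm_le_pi_norm (u d) l
      simpa [Real.norm_eq_abs] using this
    calc |c d| ≤ ∑ l : Fin (S.C (m + d)), |r (m + d) l * u d l| :=
          Finset.abs_sum_le_sum_abs _ _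
      _ = ∑ l : Fin (S.C (m + d)), r (m + d) l * |u d l| := by
          refine Finset.sum_congr rfl fun l _ => ?_
          rw [abs_mul, abs_of_nonneg ENNReal.toReal_nonneg]
      _ ≤ ∑ l : Fin (S.C (m + d)), r (m + d) l * ‖u d‖ := by
          refine Finset.sum_le_sum fun l _ => ?_
          exact mul_le_mul_of_nonneg_left (h0 l) ENNReal.toReal_nonneg
      _ = (∑ l : Fin (S.C (m + d)), r (m + d) l) * ‖u d‖ := (Finset.sum_mul _ _ _).symm
      _ ≤ 1 * ‖u d‖ := mul_le_mul_of_nonneg_right (KR.sum_bases_le S μ (m + d)) (norm_nonneg _)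
      _ = ‖u d‖ := one_mul _
  have hc0 : c 0 = 0 := by
    have htend : Filter.Tendsto (fun d => ‖u (d + 1)‖) Filter.atTop (nhds 0) :=
      hsum.tendsto_atTop_zero
    have hle : ∀ d : ℕ, |c 0| ≤ ‖u (d + 1)‖ := fun d => (hconst (d + 1)) ▸ hbound (d + 1)
    have h0 : |c 0| ≤ 0 := ge_of_tendsto' htend hle
    exact abs_eq_zero.mp (le_antisymm h0 (abs_nonneg _))
  have hcd : ∀ d, c d = 0 := fun d => (hconst d).trans hc0
  constructor
  · have hu0 : u 0 = v := by
      show ((KRP S m 0).map (Int.cast : ℤ → ℝ)).mulVec v = v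
      show ((1 : Matrix (Fin (S.C m)) (Fin (S.C m)) ℤ).map (Int.cast : ℤ → ℝ)).mulVec v = v
      rw [show ((1 : Matrix (Fin (S.C m)) (Fin (S.C m)) ℤ).map (Int.cast : ℤ → ℝ))
          = (1 : Matrix (Fin (S.C m)) (Fin (S.C m)) ℝ) from
        Matrix.map_one _ Int.cast_zero Int.cast_one, Matrix.one_mulVec]
    have hcv : ∑ l : Fin (S.C m), r m l * v l = 0 := by
      have := hcd 0
      rw [hc] at this
      simpa [hu0] using this
    have hw : ∀ l : Fin (S.C m), (w l : ℝ) = α * (S.h m l : ℝ) - v l := by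
      intro l
      have := heq l
      linarith
    calc ∑ l : Fin (S.C m), r m l * (w l : ℝ)
        = ∑ l : Fin (S.C m), (α * ((S.h m l : ℝ) * r m l) - r m l * v l) := by
          refine Finset.sum_congr rfl fun l _ => ?_
          rw [hw l]; ring
      _ = α * ∑ l : Fin (S.C m), (S.h m l : ℝ) * r m l - ∑ l : Fin (S.C m), r m l * v l := by
          rw [Finset.sum_sub_distrib, Finset.mul_sum]
      _ = α * 1 - 0 := by rw [KR.sum_heights S μ hinv m, hcv]
      _ = α := by ring
  · exact hcd
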